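/- arXiv:2209.07884 — 2 statements merged into one kernel-verified Lean document; each statement's English description precedes it below -/
import Mathlib

section
/- Let H, P, Q be real m×m matrices such that P and Q are symmetric positive definite and the discrete Lyapunov equation Hᵀ P H − P = −Q holds. Let ε ≥ 0. Then there exists a constant B ≥ 0, depending only on H, P, Q and ε, such that for every disturbance sequence d : ℕ → ℝᵐ with ‖d(k)‖ ≤ ε for all k, and every sequence x : ℕ → ℝᵐ satisfying the error dynamics x(k+1) = H x(k) + d(k+1) for all k, there exists K ∈ ℕ with ‖x(k)‖ ≤ B for all k ≥ K. (That is, the error dynamics of the disturbance observer is uniformly ultimately bounded.) -/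
open Matrix

/-- Lower bound for the quadratic form of a positive definite matrix. -/
lemma dob_posdef_lower {m : ℕ} {P : Matrix (Fin m) (Fin m) ℝ} (hP : P.PosDef) :
    ∃ α > 0, ∀ v : EuclideanSpace ℝ (Fin m),
      α * ‖v‖ ^ 2 ≤ (v : Fin m → ℝ) ⬝ᵥ P *ᵥ (v : Fin m → ℝ) := by
  rcases Nat.eq_zero_or_pos m with hm | hm
  · refine ⟨1, one_pos, fun v => ?_⟩
    subst hm
    have hv : (v : Fin 0 → ℝ) = 0 := Subsingleton.elim _ _
    have : ‖v‖ = 0 := by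
      simp [EuclideanSpace.norm_eq]
    simp [hv, this]
  · -- continuous quadratic form on the sphere attains a positive minimum
    set E := EuclideanSpace ℝ (Fin m)
    have hf : Continuous fun v : E => (v : Fin m → ℝ) ⬝ᵥ P *ᵥ (v : Fin m → ℝ) := by
      have h1 : Continuous fun v : E => (inner ℝ v ((Matrix.toEuclideanLin P).toContinuousLinearMap v) : ℝ) :=
        continuous_id.inner ((Matrix.toEuclideanLin P).toContinuousLinearMap).continuous
      have heq : (fun v : E => (v : Fin m → ℝ) ⬝ᵥ P *ᵥ (v : Fin m → ℝ))
          = fun v : E => (inner ℝ v ((Matrix.toEuclideanLin P).toContinuousLinearMap v) : ℝ) := by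
        funext v
        simp only [PiLp.inner_apply, RCLike.inner_apply, starRingEnd_apply, star_trivial,
          LinearMap.coe_toContinuousLinearMap', dotProduct]
        exact Finset.sum_congr rfl fun i _ => mul_comm _ _
      rw [heq]
      exact h1
    have hsph : (Metric.sphere (0 : E) 1).Nonempty := by
      refine ⟨EuclideanSpace.single ⟨0, hm⟩ 1, ?_⟩
      simp only [Metric.mem_sphere, dist_zero_right]
      rw [EuclideanSpace.norm_single]
      simp
    obtain ⟨v0, hv0mem, hv0min⟩ :=
      (isCompact_sphere (0 : E) 1).exists_isMinOn hsph (hf.continuousOn)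
    have hv0norm : ‖v0‖ = 1 := by simpa using hv0mem
    have hv0ne : (v0 : Fin m → ℝ) ≠ 0 := by
      intro h
      have : v0 = 0 := by simpa using h
      rw [this] at hv0norm; simp at hv0norm
    set α := (v0 : Fin m → ℝ) ⬝ᵥ P *ᵥ (v0 : Fin m → ℝ) with hα
    have hαpos : 0 < α := by simpa using hP.dotProduct_mulVec_pos hv0ne
    refine ⟨α, hαpos, fun v => ?_⟩
    rcases eq_or_ne v 0 with rfl | hv
    · simp
    · have hvn : ‖v‖ ≠ 0 := norm_ne_zero_iff.mpr hv
      set u : E := ‖v‖⁻¹ • v with hu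
      have hunorm : ‖u‖ = 1 := by
        rw [hu, norm_smul]
        simp [abs_of_nonneg (inv_nonneg.mpr (norm_nonneg v)), inv_mul_cancel₀ hvn]
      have hmin : α ≤ (u : Fin m → ℝ) ⬝ᵥ P *ᵥ (u : Fin m → ℝ) :=
        hv0min (by simpa using hunorm)
      have hscale : (u : Fin m → ℝ) ⬝ᵥ P *ᵥ (u : Fin m → ℝ)
          = ‖v‖⁻¹ ^ 2 * ((v : Fin m → ℝ) ⬝ᵥ P *ᵥ (v : Fin m → ℝ)) := by
        have : (u : Fin m → ℝ) = ‖v‖⁻¹ • (v : Fin m → ℝ) := rfl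
        rw [this, mulVec_smul, smul_dotProduct, dotProduct_smul]
        ring_nf
      rw [hscale] at hmin
      have h2 : α * ‖v‖ ^ 2 ≤ (‖v‖⁻¹ ^ 2 * ((v : Fin m → ℝ) ⬝ᵥ P *ᵥ (v : Fin m → ℝ))) * ‖v‖ ^ 2 := by
        nlinarith [sq_nonneg ‖v‖, norm_nonneg v]
      calc α * ‖v‖ ^ 2 ≤ _ := h2
        _ = (v : Fin m → ℝ) ⬝ᵥ P *ᵥ (v : Fin m → ℝ) := by
            field_simp

set_option maxHeartbeats 1000000 in
/-- Uniform ultimate boundedness of the disturbance-observer error dynamics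
`x(k+1) = H x(k) + d(k+1)` under a discrete Lyapunov equation `Hᵀ P H − P = −Q`
with `P, Q` symmetric positive definite and disturbance bound `‖d(k)‖ ≤ ε`. -/
theorem dob_error_dynamics_uniformly_ultimately_bounded {m : ℕ}
    (H P Q : Matrix (Fin m) (Fin m) ℝ)
    (hP : P.PosDef) (hQ : Q.PosDef)
    (hLyap : Hᵀ * P * H - P = -Q)
    (ε : ℝ) (hε : 0 ≤ ε) :
    ∃ B : ℝ, 0 ≤ B ∧
      ∀ d x : ℕ → EuclideanSpace ℝ (Fin m),
        (∀ k, ‖d k‖ ≤ ε) →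
        (∀ k, x (k + 1) = Matrix.toEuclideanLin H (x k) + d (k + 1)) →
        ∃ K : ℕ, ∀ k, K ≤ k → ‖x k‖ ≤ B := by
  classical
  set E := EuclideanSpace ℝ (Fin m)
  obtain ⟨α, hα, hαle⟩ := dob_posdef_lower hP
  obtain ⟨γ, hγ, hγle⟩ := dob_posdef_lower hQ
  set T := (Matrix.toEuclideanLin P).toContinuousLinearMap with hT
  set β : ℝ := ‖T‖ + α with hβdef
  have hβ : 0 < β := by positivity
  -- quadratic form and P-norm
  set gp : E → ℝ := fun v => (v : Fin m → ℝ) ⬝ᵥ P *ᵥ (v : Fin m → ℝ) with hgp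
  set gq : E → ℝ := fun v => (v : Fin m → ℝ) ⬝ᵥ Q *ᵥ (v : Fin m → ℝ) with hgq
  set N : E → ℝ := fun v => Real.sqrt (gp v) with hN
  have hgp0 : ∀ v : E, 0 ≤ gp v := by
    intro v
    have := hP.posSemidef.dotProduct_mulVec_nonneg (v : Fin m → ℝ)
    simpa [hgp] using this
  have hN0 : ∀ v : E, 0 ≤ N v := fun v => Real.sqrt_nonneg _
  -- cross bound
  have hcross : ∀ a b : E, (a : Fin m → ℝ) ⬝ᵥ P *ᵥ (b : Fin m → ℝ) ≤ β * (‖a‖ * ‖b‖) := by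
    intro a b
    have h1 : (a : Fin m → ℝ) ⬝ᵥ P *ᵥ (b : Fin m → ℝ) = (inner ℝ a (T b) : ℝ) := by
      simp only [hT, LinearMap.coe_toContinuousLinearMap', PiLp.inner_apply,
        RCLike.inner_apply, starRingEnd_apply, star_trivial, dotProduct]
      exact Finset.sum_congr rfl fun i _ => mul_comm _ _
    have h2 : (inner ℝ a (T b) : ℝ) ≤ ‖a‖ * ‖T b‖ := real_inner_le_norm a (T b)
    have h3 : ‖T b‖ ≤ ‖T‖ * ‖b‖ := T.le_opNorm b
    have h4 : ‖T‖ ≤ β := by rw [hβdef]; linarith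
    calc (a : Fin m → ℝ) ⬝ᵥ P *ᵥ (b : Fin m → ℝ) = (inner ℝ a (T b) : ℝ) := h1
      _ ≤ ‖a‖ * ‖T b‖ := h2
      _ ≤ ‖a‖ * (‖T‖ * ‖b‖) := mul_le_mul_of_nonneg_left h3 (norm_nonneg a)
      _ = ‖T‖ * (‖a‖ * ‖b‖) := by ring
      _ ≤ β * (‖a‖ * ‖b‖) := mul_le_mul_of_nonneg_right h4 (by positivity)
  have hupper : ∀ v : E, gp v ≤ β * ‖v‖ ^ 2 := by
    intro v
    have := hcross v v
    nlinarith [norm_nonneg v]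
  -- contraction constant
  set r : ℝ := Real.sqrt (1 - γ / β) with hr
  have hr0 : 0 ≤ r := Real.sqrt_nonneg _
  have hr1 : r < 1 := by
    rcases le_or_gt 0 (1 - γ / β) with h | h
    · have hsq := Real.sq_sqrt h
      have hlt : 1 - γ / β < 1 := by
        have : 0 < γ / β := div_pos hγ hβ
        linarith
      nlinarith
    · rw [hr, Real.sqrt_eq_zero_of_nonpos h.le]; norm_num
  have hgpH : ∀ v : E, gp (Matrix.toEuclideanLin H v) = gp v - gq v := by
    intro v
    have hHPH : Hᵀ * P * H = P - Q := by
      have := hLyap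
      linear_combination (norm := module) this
    have h1 : gp (Matrix.toEuclideanLin H v)
        = (v : Fin m → ℝ) ⬝ᵥ (Hᵀ * P * H) *ᵥ (v : Fin m → ℝ) := by
      show (H *ᵥ (v : Fin m → ℝ)) ⬝ᵥ P *ᵥ (H *ᵥ (v : Fin m → ℝ)) = _
      rw [← mulVec_mulVec, ← mulVec_mulVec, dotProduct_mulVec (v : Fin m → ℝ) Hᵀ,
        vecMul_transpose]
    rw [h1, hHPH, sub_mulVec, dotProduct_sub]
  have hcontr : ∀ v : E, gp (Matrix.toEuclideanLin H v) ≤ r ^ 2 * gp v := by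
    intro v
    have h1 : gq v ≥ (γ / β) * gp v := by
      have h2 := hγle v
      have h3 := hupper v
      rw [div_mul_eq_mul_div, ge_iff_le, div_le_iff₀ hβ]
      nlinarith
    rcases le_or_gt 0 (1 - γ / β) with h | h
    · rw [hr, Real.sq_sqrt h, hgpH v]
      nlinarith
    · rw [hr, Real.sqrt_eq_zero_of_nonpos h.le, hgpH v]
      have := hgp0 v
      nlinarith
  have hNcontr : ∀ v : E, N (Matrix.toEuclideanLin H v) ≤ r * N v := by
    intro v
    have h1 : gp (Matrix.toEuclideanLin H v) ≤ r ^ 2 * gp v := hcontr v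
    have h2 := Real.sqrt_le_sqrt h1
    calc N (Matrix.toEuclideanLin H v) ≤ Real.sqrt (r ^ 2 * gp v) := h2
      _ = r * N v := by
          rw [Real.sqrt_mul (sq_nonneg r), Real.sqrt_sq hr0]
  -- almost-triangle inequality
  have hsα : 0 < Real.sqrt α := Real.sqrt_pos.mpr hα
  set c : ℝ := β / Real.sqrt α + Real.sqrt β with hc
  have hc0 : 0 ≤ c := by positivity
  have hNlow : ∀ v : E, Real.sqrt α * ‖v‖ ≤ N v := by
    intro v
    have h1 : Real.sqrt (α * ‖v‖ ^ 2) ≤ N v := Real.sqrt_le_sqrt (hαle v)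
    rwa [Real.sqrt_mul hα.le, Real.sqrt_sq (norm_nonneg v)] at h1
  have hNadd : ∀ a b : E, N (a + b) ≤ N a + c * ‖b‖ := by
    intro a b
    have hexp : gp (a + b) = gp a + ((a : Fin m → ℝ) ⬝ᵥ P *ᵥ (b : Fin m → ℝ)
        + (b : Fin m → ℝ) ⬝ᵥ P *ᵥ (a : Fin m → ℝ)) + gp b := by
      show ((a : Fin m → ℝ) + (b : Fin m → ℝ)) ⬝ᵥ P *ᵥ ((a : Fin m → ℝ) + (b : Fin m → ℝ)) = _
      rw [mulVec_add, add_dotProduct, dotProduct_add, dotProduct_add]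
      ring
    have hab := hcross a b
    have hba := hcross b a
    have hgb := hupper b
    have hga : gp a = N a ^ 2 := (Real.sq_sqrt (hgp0 a)).symm
    have hla := hNlow a
    have hsβ : Real.sqrt β ^ 2 = β := Real.sq_sqrt hβ.le
    have key : gp (a + b) ≤ (N a + c * ‖b‖) ^ 2 := by
      rw [hexp, hga, hc]
      have h1 : β * ‖a‖ ≤ (β / Real.sqrt α) * N a := by
        rw [div_mul_eq_mul_div, le_div_iff₀ hsα]
        nlinarith
      have e0 : β * ‖a‖ * ‖b‖ ≤ (β / Real.sqrt α) * N a * ‖b‖ :=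
        mul_le_mul_of_nonneg_right h1 (norm_nonneg b)
      have e1 : (a : Fin m → ℝ) ⬝ᵥ P *ᵥ (b : Fin m → ℝ)
          + (b : Fin m → ℝ) ⬝ᵥ P *ᵥ (a : Fin m → ℝ)
          ≤ 2 * ((β / Real.sqrt α) * N a * ‖b‖) := by
        calc (a : Fin m → ℝ) ⬝ᵥ P *ᵥ (b : Fin m → ℝ)
            + (b : Fin m → ℝ) ⬝ᵥ P *ᵥ (a : Fin m → ℝ)
            ≤ β * (‖a‖ * ‖b‖) + β * (‖b‖ * ‖a‖) := add_le_add hab hba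
          _ = 2 * (β * ‖a‖ * ‖b‖) := by ring
          _ ≤ 2 * ((β / Real.sqrt α) * N a * ‖b‖) := by linarith [e0]
      have e2 : gp b ≤ Real.sqrt β ^ 2 * ‖b‖ ^ 2 := by rw [hsβ]; exact hgb
      have t1 : 0 ≤ Real.sqrt β * N a * ‖b‖ :=
        mul_nonneg (mul_nonneg (Real.sqrt_nonneg β) (hN0 a)) (norm_nonneg b)
      have t2 : 0 ≤ (β / Real.sqrt α) ^ 2 * ‖b‖ ^ 2 :=
        mul_nonneg (sq_nonneg _) (sq_nonneg _)
      have t3 : 0 ≤ (β / Real.sqrt α) * Real.sqrt β * ‖b‖ ^ 2 :=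
        mul_nonneg (mul_nonneg (div_nonneg hβ.le hsα.le) (Real.sqrt_nonneg β)) (sq_nonneg _)
      nlinarith [e1, e2, t1, t2, t3]
    have h2 := Real.sqrt_le_sqrt key
    have h3 : Real.sqrt ((N a + c * ‖b‖) ^ 2) = N a + c * ‖b‖ :=
      Real.sqrt_sq (by positivity)
    calc N (a + b) ≤ _ := h2
      _ = _ := h3
  -- main bound
  set D : ℝ := c * ε / (1 - r) with hD
  have h1r : 0 < 1 - r := by linarith
  have hD0 : 0 ≤ D := by positivity
  refine ⟨(1 + D) / Real.sqrt α, by positivity, fun d x hd hx => ?_⟩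
  have hstep : ∀ k, N (x (k + 1)) ≤ r * N (x k) + c * ε := by
    intro k
    rw [hx k]
    calc N (Matrix.toEuclideanLin H (x k) + d (k + 1))
        ≤ N (Matrix.toEuclideanLin H (x k)) + c * ‖d (k + 1)‖ := hNadd _ _
      _ ≤ r * N (x k) + c * ε := by
          have := hNcontr (x k)
          have := hd (k + 1)
          nlinarith
  have hNk : ∀ k, N (x k) ≤ r ^ k * N (x 0) + D := by
    intro k
    induction k with
    | zero => rw [pow_zero, one_mul]; linarith
    | succ k ih =>
        have h1 := hstep k
        have h2 : r * (r ^ k * N (x 0) + D) + c * ε = r ^ (k + 1) * N (x 0) + (r * D + c * ε) := by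
          ring
        have h3 : r * D + c * ε ≤ D := by
          rw [hD]
          have heq : r * (c * ε / (1 - r)) + c * ε = c * ε / (1 - r) := by
            field_simp
            ring
          exact le_of_eq heq
        have h4 : r * N (x k) ≤ r * (r ^ k * N (x 0) + D) :=
          mul_le_mul_of_nonneg_left ih hr0
        linarith
  -- choose K
  have htend : Filter.Tendsto (fun k : ℕ => r ^ k * N (x 0)) Filter.atTop (nhds 0) := by
    have h0 := tendsto_pow_atTop_nhds_zero_of_lt_one hr0 hr1
    simpa using h0.mul_const (N (x 0))
  have hev : ∀ᶠ k in Filter.atTop, r ^ k * N (x 0) < 1 :=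
    htend.eventually_lt_const one_pos
  obtain ⟨K, hK⟩ := Filter.eventually_atTop.mp hev
  refine ⟨K, fun k hk => ?_⟩
  have h5 : N (x k) ≤ 1 + D := by
    have := hNk k
    have := hK k hk
    linarith
  have h6 := hNlow (x k)
  rw [le_div_iff₀ hsα]
  nlinarith [h5, h6]
end

section
/- Let λ > 0, let L̂u, ΔLu be real p×q matrices, L̂w, ΔLw real p×s matrices, r ∈ ℝᵖ, w ∈ ℝˢ, and let û, Δu ∈ ℝ^q satisfy (λI + L̂uᵀ L̂u) û = L̂uᵀ r − L̂uᵀ L̂w w and, with Lu := L̂u + ΔLu and Lw := L̂w + ΔLw, (λI + Luᵀ Lu)(û + Δu) = Luᵀ r − Luᵀ Lw w. Then ‖Δu‖ ≤ (1/λ) (2‖L̂u‖‖ΔLu‖ + ‖ΔLu‖²) ‖û‖ + (1/λ) ‖ΔLu‖‖r‖ + (1/λ) (‖L̂u‖‖ΔLw‖ + ‖ΔLu‖‖L̂w‖ + ‖ΔLu‖‖ΔLw‖) ‖w‖. -/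
open Matrix
open scoped Matrix.Norms.L2Operator RealInnerProductSpace

lemma aux_te_mul {a b c : ℕ} (A : Matrix (Fin a) (Fin b) ℝ) (B : Matrix (Fin b) (Fin c) ℝ)
    (x : EuclideanSpace ℝ (Fin c)) :
    Matrix.toEuclideanLin (A * B) x = Matrix.toEuclideanLin A (Matrix.toEuclideanLin B x) := by
  simp [Matrix.toEuclideanLin_apply, Matrix.mulVec_mulVec]

lemma aux_te_one {a : ℕ} (x : EuclideanSpace ℝ (Fin a)) :
    Matrix.toEuclideanLin (1 : Matrix (Fin a) (Fin a) ℝ) x = x := by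
  simp [Matrix.toEuclideanLin_apply]

lemma aux_norm_le {a b : ℕ} (A : Matrix (Fin a) (Fin b) ℝ) (x : EuclideanSpace ℝ (Fin b)) :
    ‖Matrix.toEuclideanLin A x‖ ≤ ‖A‖ * ‖x‖ := by
  have := ((Matrix.toEuclideanLin.trans LinearMap.toContinuousLinearMap) A).le_opNorm x
  simpa [Matrix.l2_opNorm_def] using this

lemma aux_transpose_norm {a b : ℕ} (A : Matrix (Fin a) (Fin b) ℝ) : ‖Aᵀ‖ = ‖A‖ := by
  rw [← Matrix.conjTranspose_eq_transpose_of_trivial]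
  exact Matrix.l2_opNorm_conjTranspose A

lemma aux_coercive {a b : ℕ} (lam : ℝ) (_hlam : 0 < lam) (A : Matrix (Fin a) (Fin b) ℝ)
    (x : EuclideanSpace ℝ (Fin b)) :
    lam * ‖x‖ ≤ ‖Matrix.toEuclideanLin (lam • (1 : Matrix (Fin b) (Fin b) ℝ) + Aᵀ * A) x‖ := by
  have hinner : (inner ℝ (Matrix.toEuclideanLin (lam • (1 : Matrix (Fin b) (Fin b) ℝ) + Aᵀ * A) x) x : ℝ)
      = lam * ‖x‖ ^ 2 + ‖Matrix.toEuclideanLin A x‖ ^ 2 := by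
    rw [map_add, _root_.map_smul, LinearMap.add_apply, LinearMap.smul_apply, inner_add_left,
      inner_smul_left, aux_te_one, real_inner_self_eq_norm_sq, aux_te_mul,
      ← Matrix.conjTranspose_eq_transpose_of_trivial,
      Matrix.toEuclideanLin_conjTranspose_eq_adjoint, LinearMap.adjoint_inner_left,
      real_inner_self_eq_norm_sq]
    simp [starRingEnd_apply]
    try ring
  have h1 : lam * ‖x‖ ^ 2 ≤ (inner ℝ (Matrix.toEuclideanLin (lam • (1 : Matrix (Fin b) (Fin b) ℝ) + Aᵀ * A) x) x : ℝ) := by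
    rw [hinner]; nlinarith [sq_nonneg ‖Matrix.toEuclideanLin A x‖]
  have h2 := real_inner_le_norm (Matrix.toEuclideanLin (lam • (1 : Matrix (Fin b) (Fin b) ℝ) + Aᵀ * A) x) x
  rcases eq_or_lt_of_le (norm_nonneg x) with h0 | h0
  · simp [← h0]
  · nlinarith

/-- The upper bound on the cloud control-sequence error `Δu` of the truncated
data-driven predictive controller:
`‖Δu‖ ≤ (1/λ)(2‖L̂u‖‖ΔLu‖ + ‖ΔLu‖²)‖û‖ + (1/λ)‖ΔLu‖‖r‖
+ (1/λ)(‖L̂u‖‖ΔLw‖ + ‖ΔLu‖‖L̂w‖ + ‖ΔLu‖‖ΔLw‖)‖w‖`. -/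
theorem dpc_truncation_error_norm_bound {p q s : ℕ}
    (lam : ℝ) (hlam : 0 < lam)
    (Lhu dLu : Matrix (Fin p) (Fin q) ℝ)
    (Lhw dLw : Matrix (Fin p) (Fin s) ℝ)
    (r : EuclideanSpace ℝ (Fin p)) (w : EuclideanSpace ℝ (Fin s))
    (uh du : EuclideanSpace ℝ (Fin q))
    (h1 : Matrix.toEuclideanLin (lam • (1 : Matrix (Fin q) (Fin q) ℝ) + Lhuᵀ * Lhu) uh
        = Matrix.toEuclideanLin Lhuᵀ r - Matrix.toEuclideanLin (Lhuᵀ * Lhw) w)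
    (h2 : Matrix.toEuclideanLin (lam • (1 : Matrix (Fin q) (Fin q) ℝ)
            + (Lhu + dLu)ᵀ * (Lhu + dLu)) (uh + du)
        = Matrix.toEuclideanLin (Lhu + dLu)ᵀ r
          - Matrix.toEuclideanLin ((Lhu + dLu)ᵀ * (Lhw + dLw)) w) :
    ‖du‖ ≤ (1 / lam) * (2 * ‖Lhu‖ * ‖dLu‖ + ‖dLu‖ ^ 2) * ‖uh‖
        + (1 / lam) * ‖dLu‖ * ‖r‖
        + (1 / lam) * (‖Lhu‖ * ‖dLw‖ + ‖dLu‖ * ‖Lhw‖ + ‖dLu‖ * ‖dLw‖) * ‖w‖ := by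
  set M1 : Matrix (Fin q) (Fin q) ℝ := Lhuᵀ * dLu + dLuᵀ * Lhu + dLuᵀ * dLu with hM1
  set M2 : Matrix (Fin q) (Fin s) ℝ := Lhuᵀ * dLw + dLuᵀ * Lhw + dLuᵀ * dLw with hM2
  have keyeq : Matrix.toEuclideanLin (lam • (1 : Matrix (Fin q) (Fin q) ℝ)
        + (Lhu + dLu)ᵀ * (Lhu + dLu)) du
      = Matrix.toEuclideanLin dLuᵀ r - Matrix.toEuclideanLin M2 w
        - Matrix.toEuclideanLin M1 uh := by
    rw [← sub_eq_zero]
    have e0 : Matrix.toEuclideanLin (lam • (1 : Matrix (Fin q) (Fin q) ℝ)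
          + (Lhu + dLu)ᵀ * (Lhu + dLu)) du
        - (Matrix.toEuclideanLin dLuᵀ r - Matrix.toEuclideanLin M2 w
          - Matrix.toEuclideanLin M1 uh)
        = (Matrix.toEuclideanLin (lam • (1 : Matrix (Fin q) (Fin q) ℝ)
              + (Lhu + dLu)ᵀ * (Lhu + dLu)) (uh + du)
            - Matrix.toEuclideanLin (lam • (1 : Matrix (Fin q) (Fin q) ℝ) + Lhuᵀ * Lhu) uh)
          - ((Matrix.toEuclideanLin (Lhu + dLu)ᵀ r
              - Matrix.toEuclideanLin ((Lhu + dLu)ᵀ * (Lhw + dLw)) w)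
            - (Matrix.toEuclideanLin Lhuᵀ r - Matrix.toEuclideanLin (Lhuᵀ * Lhw) w)) := by
      simp only [hM1, hM2, Matrix.transpose_add, Matrix.add_mul, Matrix.mul_add,
        map_add, _root_.map_smul, LinearMap.add_apply, LinearMap.smul_apply, aux_te_one, smul_add]
      abel
    rw [e0, h1, h2]
    abel
  have hcoer := aux_coercive lam hlam (Lhu + dLu) du
  rw [keyeq] at hcoer
  have htri : ‖Matrix.toEuclideanLin dLuᵀ r - Matrix.toEuclideanLin M2 w
        - Matrix.toEuclideanLin M1 uh‖
      ≤ ‖Matrix.toEuclideanLin dLuᵀ r‖ + ‖Matrix.toEuclideanLin M2 w‖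
        + ‖Matrix.toEuclideanLin M1 uh‖ := by
    calc _ ≤ ‖Matrix.toEuclideanLin dLuᵀ r - Matrix.toEuclideanLin M2 w‖
          + ‖Matrix.toEuclideanLin M1 uh‖ := norm_sub_le _ _
      _ ≤ _ := by
        have := norm_sub_le (Matrix.toEuclideanLin dLuᵀ r) (Matrix.toEuclideanLin M2 w)
        linarith
  have hr : ‖Matrix.toEuclideanLin dLuᵀ r‖ ≤ ‖dLu‖ * ‖r‖ := by
    have := aux_norm_le dLuᵀ r
    rwa [aux_transpose_norm] at this
  have hM1n : ‖M1‖ ≤ 2 * ‖Lhu‖ * ‖dLu‖ + ‖dLu‖ ^ 2 := by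
    have t1 : ‖M1‖ ≤ ‖Lhuᵀ * dLu‖ + ‖dLuᵀ * Lhu‖ + ‖dLuᵀ * dLu‖ := norm_add₃_le
    have t2 := Matrix.l2_opNorm_mul Lhuᵀ dLu
    have t3 := Matrix.l2_opNorm_mul dLuᵀ Lhu
    have t4 := Matrix.l2_opNorm_mul dLuᵀ dLu
    rw [aux_transpose_norm] at t2 t3 t4
    nlinarith [sq_nonneg ‖dLu‖]
  have hM2n : ‖M2‖ ≤ ‖Lhu‖ * ‖dLw‖ + ‖dLu‖ * ‖Lhw‖ + ‖dLu‖ * ‖dLw‖ := by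
    have t1 : ‖M2‖ ≤ ‖Lhuᵀ * dLw‖ + ‖dLuᵀ * Lhw‖ + ‖dLuᵀ * dLw‖ := norm_add₃_le
    have t2 := Matrix.l2_opNorm_mul Lhuᵀ dLw
    have t3 := Matrix.l2_opNorm_mul dLuᵀ Lhw
    have t4 := Matrix.l2_opNorm_mul dLuᵀ dLw
    rw [aux_transpose_norm] at t2 t3 t4
    linarith
  have huh : ‖Matrix.toEuclideanLin M1 uh‖ ≤ (2 * ‖Lhu‖ * ‖dLu‖ + ‖dLu‖ ^ 2) * ‖uh‖ :=
    (aux_norm_le M1 uh).trans (mul_le_mul_of_nonneg_right hM1n (norm_nonneg _))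
  have hw : ‖Matrix.toEuclideanLin M2 w‖
      ≤ (‖Lhu‖ * ‖dLw‖ + ‖dLu‖ * ‖Lhw‖ + ‖dLu‖ * ‖dLw‖) * ‖w‖ :=
    (aux_norm_le M2 w).trans (mul_le_mul_of_nonneg_right hM2n (norm_nonneg _))
  have hfin : lam * ‖du‖ ≤ (2 * ‖Lhu‖ * ‖dLu‖ + ‖dLu‖ ^ 2) * ‖uh‖ + ‖dLu‖ * ‖r‖
      + (‖Lhu‖ * ‖dLw‖ + ‖dLu‖ * ‖Lhw‖ + ‖dLu‖ * ‖dLw‖) * ‖w‖ := by linarith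
  calc ‖du‖ = (1 / lam) * (lam * ‖du‖) := by field_simp
    _ ≤ (1 / lam) * ((2 * ‖Lhu‖ * ‖dLu‖ + ‖dLu‖ ^ 2) * ‖uh‖ + ‖dLu‖ * ‖r‖
        + (‖Lhu‖ * ‖dLw‖ + ‖dLu‖ * ‖Lhw‖ + ‖dLu‖ * ‖dLw‖) * ‖w‖) :=
      mul_le_mul_of_nonneg_left hfin (by positivity)
    _ = _ := by ring
end
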